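/- Assume additionally α ≥ √K/2. Then for every n ≥ 1 one has u_n ≤ (α + (2n−3)·K/(4α) + n)², and hence the total time needed after a reset until every one of the K arms has accumulated n exploration samples satisfies u_n + K ≤ (α + (2n−3)·K/(4α) + n)² + K. -/

import Mathlib

/-- For the diminishing-exploration schedule `u` (with parameters
`K ≥ 1`, `α > 0`), if additionally `α ≥ √K/2`, then for every `n ≥ 1` one has
`u n ≤ (α + (2n−3)·K/(4α) + n)²`, and hence the total time needed after a reset
until every one of the `K` arms has accumulated `n` exploration samples satisfies
`u n + K ≤ (α + (2n−3)·K/(4α) + n)² + K`. -/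
theorem diminishing_exploration_reset_time_bound
    (K α : ℝ) (hK : 1 ≤ K) (hα : 0 < α) (hα' : Real.sqrt K / 2 ≤ α) (u : ℕ → ℝ)
    (h1 : u 1 = ((⌈(α - K / (4 * α)) ^ 2⌉ : ℤ) : ℝ))
    (hrec : ∀ n : ℕ, 2 ≤ n →
      u n = ((⌈u (n - 1) + (K / α) * Real.sqrt (u (n - 1)) + K ^ 2 / (4 * α ^ 2)⌉ : ℤ) : ℝ)) :
    ∀ n : ℕ, 1 ≤ n →
      u n ≤ (α + (2 * (n : ℝ) - 3) * K / (4 * α) + n) ^ 2 ∧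
      u n + K ≤ (α + (2 * (n : ℝ) - 3) * K / (4 * α) + n) ^ 2 + K := by
  have hK0 : (0:ℝ) < K := by linarith
  have hKle : K ≤ (2 * α) ^ 2 := by
    have h1' : Real.sqrt K ≤ 2 * α := by linarith
    nlinarith [Real.sq_sqrt hK0.le, Real.sqrt_nonneg K]
  have hc : K / (4 * α) ≤ α := by
    rw [div_le_iff₀ (by positivity)]; nlinarith
  have hc0 : 0 ≤ K / (4 * α) := by positivity
  have main : ∀ n : ℕ, 1 ≤ n →
      u n ≤ (α + (2 * (n : ℝ) - 3) * K / (4 * α) + n) ^ 2 := by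
    intro n hn
    induction n, hn using Nat.le_induction with
    | base =>
      rw [h1]
      have hceil := (Int.ceil_lt_add_one ((α - K / (4 * α)) ^ 2)).le
      have e1 : (2 * ((1:ℕ):ℝ) - 3) * K / (4 * α) = -(K / (4 * α)) := by push_cast; ring
      push_cast at e1 ⊢
      rw [e1]
      nlinarith
    | succ n hn ih =>
      have hn1 : (1:ℝ) ≤ n := by exact_mod_cast hn
      have e2 : (2 * (n:ℝ) - 3) * K / (4 * α) = (2 * (n:ℝ) - 3) * (K / (4 * α)) := by ring
      have hA0 : 0 ≤ α + (2 * (n : ℝ) - 3) * K / (4 * α) + n := by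
        rw [e2]
        nlinarith [mul_nonneg (show (0:ℝ) ≤ 2 * (n:ℝ) - 2 by linarith) hc0]
      set A := α + (2 * (n : ℝ) - 3) * K / (4 * α) + n with hAdef
      have hs : Real.sqrt (u n) ≤ A := by
        calc Real.sqrt (u n) ≤ Real.sqrt (A ^ 2) := Real.sqrt_le_sqrt ih
          _ = A := by rw [Real.sqrt_sq hA0]
      have hs0 : 0 ≤ Real.sqrt (u n) := Real.sqrt_nonneg _
      have hu : u n ≤ Real.sqrt (u n) ^ 2 := by
        rcases le_or_gt 0 (u n) with h | h
        · rw [Real.sq_sqrt h]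
        · nlinarith [sq_nonneg (Real.sqrt (u n))]
      have hrw : u (n + 1) = ((⌈u n + (K / α) * Real.sqrt (u n)
          + K ^ 2 / (4 * α ^ 2)⌉ : ℤ) : ℝ) := by
        have := hrec (n + 1) (by omega)
        simpa using this
      set s := Real.sqrt (u n) with hsdef
      set d := K / (2 * α) with hd
      have hKα : K / α = 2 * d := by rw [hd]; field_simp
      have hK2 : K ^ 2 / (4 * α ^ 2) = d ^ 2 := by rw [hd]; field_simp; ring
      have hd0 : 0 ≤ d := by positivity
      have hceil := (Int.ceil_lt_add_one (u n + (K / α) * s + K ^ 2 / (4 * α ^ 2))).le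
      rw [hKα, hK2] at hceil
      have hAeq : α + (2 * (((n:ℕ)+1:ℕ):ℝ) - 3) * K / (4 * α) + (((n:ℕ)+1:ℕ):ℝ)
          = A + d + 1 := by
        rw [hAdef, hd]; push_cast; field_simp; ring
      push_cast at hAeq ⊢
      rw [hrw, hKα, hK2, hAeq]
      nlinarith [mul_nonneg (sub_nonneg.mpr hs) (show (0:ℝ) ≤ A + s + 2 * d by linarith),
        sq_nonneg (s + d)]
  intro n hn
  exact ⟨main n hn, by linarith [main n hn]⟩
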